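/- For every H ∈ (0,1) there exist c_H > 0 and T₀ ≥ 2 such that for all T ≥ T₀, all h ∈ (0,1], and all s = (s₁,s₂), s̃ = (s̃₁,s̃₂) ∈ (0,T]² with s₁s₂ ≤ 1, s̃₁s̃₂ ≤ 1, |s₁ − s̃₁| ≤ hT, and |s₁s₂ − s̃₁s̃₂| ≤ h, one has K_H(s,s) + K_H(s̃,s̃) − 2K_H(s,s̃) ≤ c_H·(1 + 2T^{−2}h^{−1})^{−2H}, where K_H(s,t) = B(s₁,t₁)·B(s₂,t₂) and B(a,b) = (a^{2H} + b^{2H} − |a−b|^{2H})/2. -/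

import Mathlib

/-- Covariance of fractional Brownian motion of Hurst index `H`:
`B(a,b) = (a^{2H} + b^{2H} − |a−b|^{2H})/2`. -/
noncomputable def fbmCov (H a b : ℝ) : ℝ := (a ^ (2*H) + b ^ (2*H) - |a - b| ^ (2*H)) / 2

/-- Covariance of the fractional Brownian sheet of index `H`:
`K_H(s,t) = B(s₁,t₁)·B(s₂,t₂)`. -/
noncomputable def KH (H : ℝ) (s t : ℝ × ℝ) : ℝ := fbmCov H s.1 t.1 * fbmCov H s.2 t.2

lemma rpow_subadd {x y p : ℝ} (hx : 0 ≤ x) (hy : 0 ≤ y) (hp : 0 ≤ p) (hp1 : p ≤ 1) :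
    (x + y) ^ p ≤ x ^ p + y ^ p := by
  lift x to NNReal using hx
  lift y to NNReal using hy
  have := NNReal.rpow_add_le_add_rpow x y hp hp1
  exact_mod_cast this

lemma rpow_two_mul (x H : ℝ) (hx : 0 ≤ x) : x ^ (2*H) = (x ^ H) ^ 2 := by
  rw [mul_comm, Real.rpow_mul hx, ← Real.rpow_natCast (x ^ H) 2]
  norm_num

lemma quad_abs {u v w : ℝ} (hu : 0 ≤ u) (hv : 0 ≤ v) (h1 : u ≤ v + w) (h2 : v ≤ u + w)
    (h3 : w ≤ u + v) : |w^2 - v^2 - u^2| ≤ 2 * (u * v) := by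
  rw [abs_le]; constructor <;> nlinarith

lemma rpow_tri {H x y z : ℝ} (hH0 : 0 ≤ H) (hH1 : H ≤ 1) (hx : 0 ≤ x) (hy : 0 ≤ y)
    (hz : 0 ≤ z) (h : x ≤ y + z) : x ^ H ≤ y ^ H + z ^ H :=
  le_trans (Real.rpow_le_rpow hx h hH0) (rpow_subadd hy hz hH0 hH1)

lemma cs_fbm {H a b : ℝ} (hH0 : 0 < H) (hH1 : H ≤ 1) (ha : 0 ≤ a) (hb : 0 ≤ b) :
    |a ^ (2*H) - b ^ (2*H) - |a - b| ^ (2*H)| ≤ 2 * (|a - b| ^ H * b ^ H) := by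
  have hd : (0:ℝ) ≤ |a - b| := abs_nonneg _
  rw [rpow_two_mul a H ha, rpow_two_mul b H hb, rpow_two_mul _ H hd]
  refine quad_abs (Real.rpow_nonneg hd H) (Real.rpow_nonneg hb H) ?_ ?_ ?_
  · exact rpow_tri hH0.le hH1 hd hb ha (by cases abs_cases (a - b) <;> linarith)
  · exact rpow_tri hH0.le hH1 hb hd ha (by cases abs_cases (a - b) <;> linarith)
  · exact rpow_tri hH0.le hH1 ha hd hb (by cases abs_cases (a - b) <;> linarith)

lemma cs_fbm' {H a b : ℝ} (hH0 : 0 < H) (hH1 : H ≤ 1) (ha : 0 ≤ a) (hb : 0 ≤ b) :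
    |a ^ (2*H) + b ^ (2*H) - |a - b| ^ (2*H)| ≤ 2 * (a ^ H * b ^ H) := by
  have hd : (0:ℝ) ≤ |a - b| := abs_nonneg _
  rw [rpow_two_mul a H ha, rpow_two_mul b H hb, rpow_two_mul _ H hd]
  have e : (a ^ H) ^ 2 + (b ^ H) ^ 2 - (|a - b| ^ H) ^ 2
      = -((|a - b| ^ H) ^ 2 - (b ^ H) ^ 2 - (a ^ H) ^ 2) := by ring
  rw [e, abs_neg]
  exact quad_abs (Real.rpow_nonneg ha H) (Real.rpow_nonneg hb H)
    (rpow_tri hH0.le hH1 ha hb hd (by cases abs_cases (a - b) <;> linarith))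
    (rpow_tri hH0.le hH1 hb ha hd (by cases abs_cases (a - b) <;> linarith))
    (rpow_tri hH0.le hH1 hd ha hb (by cases abs_cases (a - b) <;> linarith))

set_option maxHeartbeats 1000000 in
lemma main_est {H T h a1 a2 b1 b2 : ℝ} (hH0 : 0 < H) (hH1 : H ≤ 1)
    (hT : 2 ≤ T) (hh0 : 0 < h) (hh1 : h ≤ 1)
    (ha1 : 0 < a1) (ha2 : 0 < a2) (ha2T : a2 ≤ T)
    (hb1 : 0 < b1) (hb2 : 0 < b2)
    (hA : a1 * a2 ≤ 1) (hB : b1 * b2 ≤ 1)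
    (hd1 : |a1 - b1| ≤ h * T) (hd2 : |a1 * a2 - b1 * b2| ≤ h) :
    KH H (a1, a2) (a1, a2) + KH H (b1, b2) (b1, b2) - 2 * KH H (a1, a2) (b1, b2)
      ≤ 144 * (1 + 2 / T^2 / h) ^ (-(2*H)) := by
  have hT0 : (0:ℝ) < T := by linarith
  have hT2 : (1:ℝ) ≤ T^2 := by nlinarith
  have h2H0 : (0:ℝ) < 2*H := by linarith
  have h2H2 : 2*H ≤ 2 := by linarith
  have hdn1 : (0:ℝ) ≤ |a1 - b1| := abs_nonneg _
  have hdn2 : (0:ℝ) ≤ |a2 - b2| := abs_nonneg _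
  -- expansion
  have key : KH H (a1, a2) (a1, a2) + KH H (b1, b2) (b1, b2) - 2 * KH H (a1, a2) (b1, b2)
      = |a1 - b1| ^ (2*H) * a2 ^ (2*H) + b1 ^ (2*H) * |a2 - b2| ^ (2*H)
        + 2 * ((fbmCov H a1 b1 - b1 ^ (2*H)) * (a2 ^ (2*H) - fbmCov H a2 b2)) := by
    simp only [KH, fbmCov, sub_self, abs_zero, Real.zero_rpow h2H0.ne']
    ring
  -- Cauchy-Schwarz bounds
  have hRQ : |fbmCov H a1 b1 - b1 ^ (2*H)| ≤ |a1 - b1| ^ H * b1 ^ H := by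
    have e : fbmCov H a1 b1 - b1 ^ (2*H)
        = (a1 ^ (2*H) - b1 ^ (2*H) - |a1 - b1| ^ (2*H)) / 2 := by
      simp only [fbmCov]; ring
    rw [e, abs_div, abs_two]
    have := cs_fbm (a := a1) (b := b1) hH0 hH1 ha1.le hb1.le
    linarith
  have hUW : |a2 ^ (2*H) - fbmCov H a2 b2| ≤ |a2 - b2| ^ H * a2 ^ H := by
    have e : a2 ^ (2*H) - fbmCov H a2 b2
        = -((b2 ^ (2*H) - a2 ^ (2*H) - |b2 - a2| ^ (2*H)) / 2) := by
      simp only [fbmCov]; rw [abs_sub_comm b2 a2]; ring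
    rw [e, abs_neg, abs_div, abs_two, abs_sub_comm a2 b2]
    have := cs_fbm (a := b2) (b := a2) hH0 hH1 hb2.le ha2.le
    linarith
  -- the two diagonal terms are squares
  set D1 : ℝ := (|a1 - b1| * a2) ^ H with hD1def
  set D2 : ℝ := (b1 * |a2 - b2|) ^ H with hD2def
  have hD1e : D1 = |a1 - b1| ^ H * a2 ^ H := Real.mul_rpow hdn1 ha2.le
  have hD2e : D2 = b1 ^ H * |a2 - b2| ^ H := Real.mul_rpow hb1.le hdn2
  have hD1 : |a1 - b1| ^ (2*H) * a2 ^ (2*H) = D1 ^ 2 := by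
    rw [hD1e, rpow_two_mul _ H hdn1, rpow_two_mul _ H ha2.le]; ring
  have hD2 : b1 ^ (2*H) * |a2 - b2| ^ (2*H) = D2 ^ 2 := by
    rw [hD2e, rpow_two_mul _ H hb1.le, rpow_two_mul _ H hdn2]; ring
  have hD1n : 0 ≤ D1 := Real.rpow_nonneg (by positivity) _
  have hD2n : 0 ≤ D2 := Real.rpow_nonneg (by positivity) _
  -- cross term bound
  have hcross : (fbmCov H a1 b1 - b1 ^ (2*H)) * (a2 ^ (2*H) - fbmCov H a2 b2) ≤ D1 * D2 := by
    calc (fbmCov H a1 b1 - b1 ^ (2*H)) * (a2 ^ (2*H) - fbmCov H a2 b2)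
        ≤ |(fbmCov H a1 b1 - b1 ^ (2*H)) * (a2 ^ (2*H) - fbmCov H a2 b2)| := le_abs_self _
      _ = |fbmCov H a1 b1 - b1 ^ (2*H)| * |a2 ^ (2*H) - fbmCov H a2 b2| := abs_mul _ _
      _ ≤ (|a1 - b1| ^ H * b1 ^ H) * (|a2 - b2| ^ H * a2 ^ H) :=
          mul_le_mul hRQ hUW (abs_nonneg _) (by positivity)
      _ = D1 * D2 := by rw [hD1e, hD2e]; ring
  -- step 1
  have step1 : KH H (a1, a2) (a1, a2) + KH H (b1, b2) (b1, b2) - 2 * KH H (a1, a2) (b1, b2)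
      ≤ (D1 + D2) ^ 2 := by
    rw [key, hD1, hD2]
    have e : (D1 + D2) ^ 2 = D1 ^ 2 + D2 ^ 2 + 2 * (D1 * D2) := by ring
    linarith [hcross]
  -- size bounds on D1, D2
  have hyb : |a1 - b1| * a2 ≤ h * T ^ 2 := by
    calc |a1 - b1| * a2 ≤ (h * T) * T :=
          mul_le_mul hd1 ha2T ha2.le (mul_nonneg hh0.le hT0.le)
      _ = h * T ^ 2 := by ring
  have hBd1 : D1 ≤ (h * T ^ 2) ^ H :=
    Real.rpow_le_rpow (by positivity) hyb hH0.le
  have hyb2 : b1 * |a2 - b2| ≤ 2 * (h * T ^ 2) := by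
    have e : b1 * |a2 - b2| = |b1 * a2 - b1 * b2| := by
      rw [show b1 * a2 - b1 * b2 = b1 * (a2 - b2) from by ring, abs_mul, abs_of_nonneg hb1.le]
    have t1 : |b1 * a2 - b1 * b2| ≤ |b1 * a2 - a1 * a2| + |a1 * a2 - b1 * b2| :=
      abs_sub_le _ _ _
    have t2 : |b1 * a2 - a1 * a2| ≤ h * T ^ 2 := by
      have e2 : |b1 * a2 - a1 * a2| = |a1 - b1| * a2 := by
        rw [show b1 * a2 - a1 * a2 = -((a1 - b1) * a2) from by ring, abs_neg, abs_mul,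
          abs_of_nonneg ha2.le]
      rw [e2]; exact hyb
    have t3 : h ≤ h * T ^ 2 := le_mul_of_one_le_right hh0.le hT2
    rw [e]; linarith
  have hBd2 : D2 ≤ (2 * (h * T ^ 2)) ^ H :=
    Real.rpow_le_rpow (by positivity) hyb2 hH0.le
  have hBd1' : D1 ≤ (2 * (h * T ^ 2)) ^ H := by
    refine le_trans hBd1 (Real.rpow_le_rpow (by positivity)
      (by linarith [mul_pos hh0 (pow_pos hT0 2)]) hH0.le)
  -- step 2 : small-scale bound
  have step2 : (D1 + D2) ^ 2 ≤ 4 * (2 * (h * T ^ 2)) ^ (2*H) := by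
    have hsum : D1 + D2 ≤ 2 * (2 * (h * T ^ 2)) ^ H := by linarith
    have h1 : (D1 + D2) ^ 2 ≤ (2 * (2 * (h * T ^ 2)) ^ H) ^ 2 :=
      pow_le_pow_left₀ (by linarith) hsum 2
    rw [rpow_two_mul _ H (by positivity)]
    have e : (2 * (2 * (h * T ^ 2)) ^ H) ^ 2 = 4 * ((2 * (h * T ^ 2)) ^ H) ^ 2 := by ring
    linarith [h1]
  -- crude bound LHS ≤ 4
  have hR : |fbmCov H a1 b1| ≤ a1 ^ H * b1 ^ H := by
    have e : fbmCov H a1 b1 = (a1 ^ (2*H) + b1 ^ (2*H) - |a1 - b1| ^ (2*H)) / 2 := rfl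
    rw [e, abs_div, abs_two]
    have := cs_fbm' (a := a1) (b := b1) hH0 hH1 ha1.le hb1.le
    linarith
  have hW : |fbmCov H a2 b2| ≤ a2 ^ H * b2 ^ H := by
    have e : fbmCov H a2 b2 = (a2 ^ (2*H) + b2 ^ (2*H) - |a2 - b2| ^ (2*H)) / 2 := rfl
    rw [e, abs_div, abs_two]
    have := cs_fbm' (a := a2) (b := b2) hH0 hH1 ha2.le hb2.le
    linarith
  have hPU : a1 ^ (2*H) * a2 ^ (2*H) ≤ 1 := by
    rw [← Real.mul_rpow ha1.le ha2.le]
    exact Real.rpow_le_one (by positivity) hA h2H0.le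
  have hQV : b1 ^ (2*H) * b2 ^ (2*H) ≤ 1 := by
    rw [← Real.mul_rpow hb1.le hb2.le]
    exact Real.rpow_le_one (by positivity) hB h2H0.le
  have hRW : |fbmCov H a1 b1 * fbmCov H a2 b2| ≤ 1 := by
    rw [abs_mul]
    calc |fbmCov H a1 b1| * |fbmCov H a2 b2|
        ≤ (a1 ^ H * b1 ^ H) * (a2 ^ H * b2 ^ H) :=
          mul_le_mul hR hW (abs_nonneg _) (by positivity)
      _ = (a1 * a2) ^ H * (b1 * b2) ^ H := by
          rw [Real.mul_rpow ha1.le ha2.le, Real.mul_rpow hb1.le hb2.le]; ring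
      _ ≤ 1 := by
          apply mul_le_one₀ (Real.rpow_le_one (by positivity) hA hH0.le)
            (Real.rpow_nonneg (by positivity) _)
            (Real.rpow_le_one (by positivity) hB hH0.le)
  have bound4 : KH H (a1, a2) (a1, a2) + KH H (b1, b2) (b1, b2) - 2 * KH H (a1, a2) (b1, b2)
      ≤ 4 := by
    have e1 : KH H (a1, a2) (a1, a2) = a1 ^ (2*H) * a2 ^ (2*H) := by
      simp only [KH, fbmCov, sub_self, abs_zero, Real.zero_rpow h2H0.ne']; ring
    have e2 : KH H (b1, b2) (b1, b2) = b1 ^ (2*H) * b2 ^ (2*H) := by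
      simp only [KH, fbmCov, sub_self, abs_zero, Real.zero_rpow h2H0.ne']; ring
    have e3 : KH H (a1, a2) (b1, b2) = fbmCov H a1 b1 * fbmCov H a2 b2 := rfl
    rw [e1, e2, e3]
    have := neg_abs_le (fbmCov H a1 b1 * fbmCov H a2 b2)
    linarith
  -- rewrite the right-hand side
  have hy0 : (0:ℝ) < h * T ^ 2 := by positivity
  have hrw : (1 + 2 / T ^ 2 / h) ^ (-(2*H)) = (h * T ^ 2 / (h * T ^ 2 + 2)) ^ (2*H) := by
    have e : (1 + 2 / T ^ 2 / h) = (h * T ^ 2 + 2) / (h * T ^ 2) := by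
      field_simp
    rw [e, Real.rpow_neg (by positivity), ← Real.inv_rpow (by positivity), inv_div]
  have hZn : 0 ≤ (h * T ^ 2 / (h * T ^ 2 + 2)) ^ (2*H) := Real.rpow_nonneg (by positivity) _
  rw [hrw]
  rcases le_total 1 (h * T ^ 2) with hy1 | hy1
  · -- large y : use the crude bound
    have hfrac : (1:ℝ)/3 ≤ h * T ^ 2 / (h * T ^ 2 + 2) := by
      rw [div_le_div_iff₀ (by norm_num) (by positivity)]; linarith
    have hmono : ((1:ℝ)/3) ^ (2*H) ≤ (h * T ^ 2 / (h * T ^ 2 + 2)) ^ (2*H) :=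
      Real.rpow_le_rpow (by norm_num) hfrac h2H0.le
    have h19 : ((1:ℝ)/9) ≤ ((1:ℝ)/3) ^ (2*H) := by
      have := Real.rpow_le_rpow_of_exponent_ge (by norm_num : (0:ℝ) < 1/3)
        (by norm_num : (1:ℝ)/3 ≤ 1) h2H2
      have e : ((1:ℝ)/3) ^ (2:ℝ) = 1/9 := by
        rw [show ((2:ℝ)) = ((2:ℕ):ℝ) from by norm_num, Real.rpow_natCast]; norm_num
      linarith [this, e.ge]
    linarith [bound4]
  · -- small y : use step1 + step2
    have key2 : (2 * (h * T ^ 2)) ^ (2*H) ≤ 36 * (h * T ^ 2 / (h * T ^ 2 + 2)) ^ (2*H) := by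
      have e2 : 2 * (h * T ^ 2) = (2 * (h * T ^ 2 + 2)) * (h * T ^ 2 / (h * T ^ 2 + 2)) := by
        field_simp
      rw [e2, Real.mul_rpow (by positivity) (by positivity)]
      have h36 : (2 * (h * T ^ 2 + 2)) ^ (2*H) ≤ 36 := by
        calc (2 * (h * T ^ 2 + 2)) ^ (2*H) ≤ (6:ℝ) ^ (2*H) :=
              Real.rpow_le_rpow (by positivity) (by linarith) h2H0.le
          _ ≤ (6:ℝ) ^ (2:ℝ) := Real.rpow_le_rpow_of_exponent_le (by norm_num) h2H2
          _ = 36 := by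
              rw [show ((2:ℝ)) = ((2:ℕ):ℝ) from by norm_num, Real.rpow_natCast]; norm_num
      exact mul_le_mul_of_nonneg_right h36 hZn
    calc KH H (a1, a2) (a1, a2) + KH H (b1, b2) (b1, b2) - 2 * KH H (a1, a2) (b1, b2)
        ≤ (D1 + D2) ^ 2 := step1
      _ ≤ 4 * (2 * (h * T ^ 2)) ^ (2*H) := step2
      _ ≤ 4 * (36 * (h * T ^ 2 / (h * T ^ 2 + 2)) ^ (2*H)) := by linarith
      _ = 144 * (h * T ^ 2 / (h * T ^ 2 + 2)) ^ (2*H) := by ring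

/-- first assertion of Lemma 1: for every `H ∈ (0,1)` there exist `c_H > 0`
and `T₀ ≥ 2` such that for all `T ≥ T₀`, `h ∈ (0,1]` and `s, s̃ ∈ (0,T]²` with
`s₁s₂ ≤ 1`, `s̃₁s̃₂ ≤ 1`, `|s₁−s̃₁| ≤ hT`, `|s₁s₂−s̃₁s̃₂| ≤ h`, one has
`E|x(s)−x(s̃)|² ≤ c_H (1 + 2T⁻²h⁻¹)^{−2H}`. -/
theorem statement15 (H : ℝ) (hH : H ∈ Set.Ioo (0:ℝ) 1) :
    ∃ cH > (0:ℝ), ∃ T₀ : ℝ, 2 ≤ T₀ ∧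
      ∀ T : ℝ, T₀ ≤ T → ∀ h : ℝ, h ∈ Set.Ioc (0:ℝ) 1 → ∀ s s' : ℝ × ℝ,
        s.1 ∈ Set.Ioc (0:ℝ) T → s.2 ∈ Set.Ioc (0:ℝ) T →
        s'.1 ∈ Set.Ioc (0:ℝ) T → s'.2 ∈ Set.Ioc (0:ℝ) T →
        s.1 * s.2 ≤ 1 → s'.1 * s'.2 ≤ 1 →
        |s.1 - s'.1| ≤ h * T → |s.1 * s.2 - s'.1 * s'.2| ≤ h →
        KH H s s + KH H s' s' - 2 * KH H s s'
          ≤ cH * (1 + 2 / T^2 / h) ^ (-(2*H)) := by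
  obtain ⟨hH0, hH1⟩ := hH
  refine ⟨144, by norm_num, 2, le_refl 2, ?_⟩
  intro T hT h hh s s' hs1 hs2 hs1' hs2' hA hB hd1 hd2
  obtain ⟨a1, a2⟩ := s
  obtain ⟨b1, b2⟩ := s'
  exact main_est hH0 hH1.le hT hh.1 hh.2 hs1.1 hs2.1 hs2.2 hs1'.1 hs2'.1 hA hB hd1 hd2
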